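/- Let X be a finite set with |X| = n ≥ 1 and let U be a finite family of distinct nonempty subsets of X such that every antichain (under set inclusion) contained in U has at most a members, where a ≥ 1. Then the group of all bijections τ : U → U satisfying |τ(B)| = |B| for every B ∈ U (the cardinality-preserving permutations of U) has order at most (a!)^n. -/

import Mathlib

theorem stmt11 {X : Type*} [Fintype X] [DecidableEq X] (n a : ℕ)
    (hn : Fintype.card X = n) (hn1 : 1 ≤ n) (ha : 1 ≤ a)
    (U : Finset (Finset X)) (hnonempty : ∀ B ∈ U, B.Nonempty)
    (hantichain : ∀ D ⊆ U, IsAntichain (· ⊆ ·) (↑D : Set (Finset X)) → D.card ≤ a) :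
    Nat.card {τ : Equiv.Perm {A // A ∈ U} //
        ∀ B : {A // A ∈ U}, ((τ B : Finset X)).card = (B : Finset X).card} ≤
      a.factorial ^ n := by
  classical
  set S : ℕ → Finset (Finset X) := fun k => U.filter (fun A => A.card = k) with hS
  have hSsub : ∀ k, S k ⊆ U := fun k => Finset.filter_subset _ _
  have hcard : ∀ B ∈ U, 1 ≤ B.card ∧ B.card ≤ n := by
    intro B hB
    refine ⟨Finset.card_pos.mpr (hnonempty B hB), ?_⟩
    calc B.card ≤ Fintype.card X := Finset.card_le_univ B
    _ = n := hn
  have hSa : ∀ k, (S k).card ≤ a := by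
    intro k
    refine hantichain _ (hSsub k) ?_
    intro A hA B hB hne hsub
    simp only [Finset.coe_filter, Set.mem_setOf_eq, hS] at hA hB
    exact hne (Finset.eq_of_subset_of_card_le hsub (by omega))
  -- the embedding map
  set Φ : {τ : Equiv.Perm {A // A ∈ U} //
        ∀ B : {A // A ∈ U}, ((τ B : Finset X)).card = (B : Finset X).card} →
      (∀ k : Fin n, ({A // A ∈ S (k + 1)} ↪ {A // A ∈ S (k + 1)})) := by
    intro τp k
    refine ⟨fun A => ⟨(τp.1 ⟨A.1, hSsub _ A.2⟩ : {A // A ∈ U}).1, ?_⟩, ?_⟩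
    · have hA := A.2
      simp only [hS, Finset.mem_filter] at hA ⊢
      refine ⟨(τp.1 ⟨A.1, hSsub _ A.2⟩).2, ?_⟩
      rw [τp.2 ⟨A.1, hSsub _ A.2⟩]
      exact hA.2
    · intro A B h
      simp only [Subtype.mk.injEq] at h
      have := τp.1.injective (Subtype.ext h)
      exact Subtype.ext (Subtype.mk_eq_mk.mp this)
  have hΦinj : Function.Injective Φ := by
    intro τp σp h
    refine Subtype.ext (Equiv.ext fun B => Subtype.ext ?_)
    have hB := (hcard B.1 B.2)
    have hk : B.1.card - 1 < n := by omega
    have hmem : B.1 ∈ S (⟨B.1.card - 1, hk⟩ : Fin n).1.succ := by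
      simp only [hS, Finset.mem_filter]
      exact ⟨B.2, by omega⟩
    have h3 := congrFun (congrFun (congrArg (fun f => fun k => (f k : _ → _)) h)
      ⟨B.1.card - 1, hk⟩) ⟨B.1, hmem⟩
    simp only [Φ, Function.Embedding.coeFn_mk, Subtype.mk.injEq] at h3
    have h4 := congrArg Subtype.val h3
    exact h4
  calc Nat.card _ ≤ Nat.card (∀ k : Fin n, ({A // A ∈ S (k + 1)} ↪ {A // A ∈ S (k + 1)})) :=
        Nat.card_le_card_of_injective Φ hΦinj
    _ = ∏ k : Fin n, Nat.card ({A // A ∈ S (k + 1)} ↪ {A // A ∈ S (k + 1)}) := by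
        rw [Nat.card_pi]
    _ ≤ ∏ _k : Fin n, a.factorial := by
        refine Finset.prod_le_prod (fun _ _ => Nat.zero_le _) (fun k _ => ?_)
        rw [Nat.card_eq_fintype_card, Fintype.card_embedding_eq, Fintype.card_coe,
          Nat.descFactorial_self]
        exact Nat.factorial_le (hSa _)
    _ = a.factorial ^ n := by simp
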